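/- Let ε be a random variable with the standard Gumbel distribution, let t ≥ 1, and let a_1,…,a_t ∈ ℝ. Then E[∏_{j=1}^t F(ε + a_j)] = (1 + Σ_{j=1}^t e^{−a_j})^{−1}, where F(x) = exp(−e^{−x}) is the standard Gumbel CDF. Equivalently, ∫_ℝ (∏_{j=1}^t exp(−e^{−(x+a_j)}))·e^{−x}·exp(−e^{−x}) dx = (1 + Σ_{j=1}^t e^{−a_j})^{−1}. -/

import Mathlib

open MeasureTheory Real Set Filter

lemma exp_mul_integrableOn_Iic {b : ℝ} (hb : 0 < b) :
    IntegrableOn (fun x : ℝ => Real.exp (b * x)) (Iic (0:ℝ)) := by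
  apply integrableOn_Iic_of_intervalIntegral_norm_bounded (1/b) 0
    (fun i : ℝ => (continuous_exp.comp (continuous_const.mul continuous_id)).integrableOn_Ioc)
    tendsto_id
  filter_upwards with i
  simp only [id_eq, Pi.mul_apply, Function.comp_apply, Real.norm_of_nonneg (Real.exp_pos _).le]
  rw [intervalIntegral.integral_comp_mul_left (fun y => Real.exp y) hb.ne',
    integral_exp]
  rw [smul_eq_mul, mul_zero, Real.exp_zero, one_div]
  have : Real.exp (b * i) ≥ 0 := (Real.exp_pos _).le
  have hbi : b⁻¹ * (1 - Real.exp (b * i)) ≤ b⁻¹ * 1 := by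
    apply mul_le_mul_of_nonneg_left _ (inv_nonneg.2 hb.le); linarith
  linarith [hbi]


/-- Expectation of a product of shifted Gumbel CDFs under the standard Gumbel
distribution (density `exp(−x − e^{−x})`):
`E[∏_j F(ε + a_j)] = (1 + Σ_j e^{−a_j})⁻¹` where `F(x) = exp(−e^{−x})`. -/
theorem stmt13 (t : ℕ) (ht : 1 ≤ t) (a : Fin t → ℝ) :
    ∫ x : ℝ,
        (∏ j : Fin t, Real.exp (-Real.exp (-(x + a j)))) *
          (Real.exp (-x) * Real.exp (-Real.exp (-x)))
      = (1 + ∑ j : Fin t, Real.exp (-(a j)))⁻¹ := by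
  set c : ℝ := 1 + ∑ j : Fin t, Real.exp (-(a j)) with hc
  have hsum : (0:ℝ) ≤ ∑ j : Fin t, Real.exp (-(a j)) :=
    Finset.sum_nonneg fun j _ => (Real.exp_pos _).le
  have hspos : (0:ℝ) < ∑ j : Fin t, Real.exp (-(a j)) := by
    have : Nonempty (Fin t) := Fin.pos_iff_nonempty.mp ht
    exact Finset.sum_pos (fun j _ => Real.exp_pos _) Finset.univ_nonempty
  have hc1 : 1 < c := by simp [hc]; linarith
  have hcpos : 0 < c := by linarith
  -- rewrite the integrand
  have key : ∀ x : ℝ,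
      (∏ j : Fin t, Real.exp (-Real.exp (-(x + a j)))) *
        (Real.exp (-x) * Real.exp (-Real.exp (-x)))
      = Real.exp (-x) * Real.exp (-(c * Real.exp (-x))) := by
    intro x
    have h1 : ∀ j : Fin t, Real.exp (-(x + a j)) = Real.exp (-(a j)) * Real.exp (-x) := by
      intro j; rw [← Real.exp_add]; ring_nf
    have hs : ∑ j : Fin t, -Real.exp (-(x + a j))
        = -((∑ j : Fin t, Real.exp (-(a j))) * Real.exp (-x)) := by
      simp only [h1, ← Finset.sum_neg_distrib, neg_mul, Finset.sum_mul]
    rw [← Real.exp_sum, ← Real.exp_add, ← Real.exp_add, ← Real.exp_add, hs, hc]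
    ring_nf
  simp only [key]
  -- FTC on the whole line
  set F : ℝ → ℝ := fun x => c⁻¹ * Real.exp (-(c * Real.exp (-x))) with hF
  have hderiv : ∀ x : ℝ, HasDerivAt F (Real.exp (-x) * Real.exp (-(c * Real.exp (-x)))) x := by
    intro x
    have h1 : HasDerivAt (fun y : ℝ => Real.exp (-y)) (Real.exp (-x) * (-1)) x :=
      (hasDerivAt_neg x).exp
    have h2 : HasDerivAt F
        (c⁻¹ * (Real.exp (-(c * Real.exp (-x))) * -(c * (Real.exp (-x) * -1)))) x :=
      ((h1.const_mul c).neg.exp).const_mul c⁻¹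
    convert h2 using 1
    field_simp
  have hnn : ∀ x : ℝ, 0 ≤ Real.exp (-x) * Real.exp (-(c * Real.exp (-x))) :=
    fun x => mul_nonneg (Real.exp_pos _).le (Real.exp_pos _).le
  have hmeas : AEStronglyMeasurable (fun x : ℝ => Real.exp (-x) * Real.exp (-(c * Real.exp (-x))))
      (volume : Measure ℝ) := by
    apply Continuous.aestronglyMeasurable
    continuity
  have hIoi : IntegrableOn (fun x : ℝ => Real.exp (-x) * Real.exp (-(c * Real.exp (-x)))) (Ioi 0) := by
    apply Integrable.mono' (exp_neg_integrableOn_Ioi 0 one_pos) hmeas.restrict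
    filter_upwards with x
    rw [Real.norm_of_nonneg (hnn x)]
    calc Real.exp (-x) * Real.exp (-(c * Real.exp (-x)))
        ≤ Real.exp (-x) * 1 := by
          apply mul_le_mul_of_nonneg_left _ (Real.exp_pos _).le
          rw [← Real.exp_zero]
          exact Real.exp_le_exp.2 (neg_nonpos.2 (by positivity))
      _ = Real.exp (-1 * x) := by norm_num
  have hIic : IntegrableOn (fun x : ℝ => Real.exp (-x) * Real.exp (-(c * Real.exp (-x)))) (Iic 0) := by
    apply Integrable.mono' (exp_mul_integrableOn_Iic (b := c - 1) (by linarith)) hmeas.restrict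
    filter_upwards with x
    rw [Real.norm_of_nonneg (hnn x), ← Real.exp_add]
    apply Real.exp_le_exp.2
    have hxe : x + 1 ≤ Real.exp (-x) + x + x := by
      nlinarith [Real.add_one_le_exp (-x)]
    nlinarith [Real.add_one_le_exp (-x), hcpos]
  have hint : Integrable (fun x : ℝ => Real.exp (-x) * Real.exp (-(c * Real.exp (-x)))) := by
    have := hIic.union hIoi
    rwa [Iic_union_Ioi, integrableOn_univ] at this
  have hbot : Tendsto F atBot (nhds 0) := by
    have h1 : Tendsto (fun x : ℝ => Real.exp (-x)) atBot atTop :=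
      Real.tendsto_exp_atTop.comp tendsto_neg_atBot_atTop
    have h2 : Tendsto (fun x : ℝ => -(c * Real.exp (-x))) atBot atBot :=
      tendsto_neg_atTop_atBot.comp (h1.const_mul_atTop hcpos)
    have h3 : Tendsto (fun x : ℝ => Real.exp (-(c * Real.exp (-x)))) atBot (nhds 0) :=
      Real.tendsto_exp_atBot.comp h2
    simpa using h3.const_mul c⁻¹
  have htop : Tendsto F atTop (nhds c⁻¹) := by
    have h1 : Tendsto (fun x : ℝ => Real.exp (-x)) atTop (nhds 0) :=
      Real.tendsto_exp_atBot.comp tendsto_neg_atTop_atBot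
    have h2 : Tendsto (fun x : ℝ => -(c * Real.exp (-x))) atTop (nhds (-(c * 0))) :=
      (h1.const_mul c).neg
    have h3 := ((Real.continuous_exp.tendsto _).comp h2).const_mul c⁻¹
    simpa using h3
  rw [integral_of_hasDerivAt_of_tendsto hderiv hint hbot htop, sub_zero]
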